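/- arXiv:1407.0503 — 2 statements merged into one kernel-verified Lean document; each statement's English description precedes it below -/
import Mathlib

section
/- Let X be a topological space and let E be a nonempty ambiguous subset of X (both Fσ and Gδ in X) such that E, with the subspace topology, is a perfect space (every open subset of E is Fσ in E). Then E is an H₁-retract of X. -/
/-- A set is an Fσ-set if it is a countable union of closed sets. -/
def IsFsigma {X : Type*} [TopologicalSpace X] (A : Set X) : Prop :=
  ∃ F : ℕ → Set X, (∀ n, IsClosed (F n)) ∧ A = ⋃ n, F n

/-- A mapping is of the first Lebesgue class if the preimage of every open set is Fσ. -/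
def LebesgueClassOne {X Y : Type*} [TopologicalSpace X] [TopologicalSpace Y] (g : X → Y) : Prop :=
  ∀ V : Set Y, IsOpen V → IsFsigma (g ⁻¹' V)

/-- `E` is an H₁-retract of `X` if there is a first Lebesgue class map `r : X → E`
fixing the points of `E`. -/
def IsH1Retract {X : Type*} [TopologicalSpace X] (E : Set X) : Prop :=
  ∃ r : X → E, (∀ x : E, r x = x) ∧ LebesgueClassOne r

lemma isFsigma_iUnion {X : Type*} [TopologicalSpace X] {A : ℕ → Set X}
    (h : ∀ n, IsFsigma (A n)) : IsFsigma (⋃ n, A n) := by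
  choose F hFcl hFeq using h
  refine ⟨fun k => F k.unpair.1 k.unpair.2, fun k => hFcl _ _, ?_⟩
  rw [Set.iUnion_unpair fun n m => F n m]
  rw [Set.iUnion_congr hFeq]

lemma isFsigma_union {X : Type*} [TopologicalSpace X] {A B : Set X}
    (hA : IsFsigma A) (hB : IsFsigma B) : IsFsigma (A ∪ B) := by
  obtain ⟨F, hFcl, rfl⟩ := hA
  obtain ⟨G, hGcl, rfl⟩ := hB
  exact ⟨fun n => F n ∪ G n, fun n => (hFcl n).union (hGcl n),
    (Set.iUnion_union_distrib F G).symm⟩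

lemma isFsigma_empty {X : Type*} [TopologicalSpace X] : IsFsigma (∅ : Set X) :=
  ⟨fun _ => ∅, fun _ => isClosed_empty, by simp⟩

/-- A nonempty perfect ambiguous subset of a topological space is an H₁-retract. -/
theorem isH1Retract_of_perfect_ambiguous {X : Type*} [TopologicalSpace X] {E : Set X}
    (hne : E.Nonempty) (hFσ : IsFsigma E) (hGδ : IsGδ E)
    (hperf : ∀ V : Set E, IsOpen V → IsFsigma V) :
    IsH1Retract E := by
  classical
  obtain ⟨e₀, he₀⟩ := hne
  set r : X → E := fun x => if h : x ∈ E then ⟨x, h⟩ else ⟨e₀, he₀⟩ with hr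
  refine ⟨r, fun x => by simp [hr, x.2], ?_⟩
  intro V hV
  -- preimage splits as (val '' V) ∪ (Eᶜ if e₀ ∈ V)
  have key : r ⁻¹' V =
      (Subtype.val '' V) ∪ (if (⟨e₀, he₀⟩ : E) ∈ V then Eᶜ else ∅) := by
    ext x
    by_cases hx : x ∈ E
    · simp only [Set.mem_preimage, hr, dif_pos hx, Set.mem_union, Set.mem_image]
      constructor
      · intro h; exact Or.inl ⟨⟨x, hx⟩, h, rfl⟩
      · rintro (⟨y, hy, rfl⟩ | h)
        · exact hy
        · exfalso; split at h <;> simp_all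
    · simp only [Set.mem_preimage, hr, dif_neg hx, Set.mem_union, Set.mem_image]
      constructor
      · intro h
        refine Or.inr ?_
        rw [if_pos h]; exact hx
      · rintro (⟨y, hy, rfl⟩ | h)
        · exact absurd y.2 hx
        · split at h
          · assumption
          · exact absurd h (Set.notMem_empty x)
  rw [key]
  -- val '' V is Fσ in X
  have hval : IsFsigma (Subtype.val '' V : Set X) := by
    obtain ⟨G, hGcl, hGeq⟩ := hperf V hV
    have : (Subtype.val '' V : Set X) = ⋃ n, Subtype.val '' (G n) := by
      rw [hGeq, Set.image_iUnion]
    rw [this]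
    refine isFsigma_iUnion fun n => ?_
    obtain ⟨C, hC, hCeq⟩ := (isClosed_induced_iff).1 (hGcl n)
    obtain ⟨K, hKcl, hKeq⟩ := hFσ
    have himg : Subtype.val '' (G n) = E ∩ C := by
      rw [← hCeq]
      ext x
      simp only [Set.mem_image, Set.mem_inter_iff]
      constructor
      · rintro ⟨y, hy, rfl⟩; exact ⟨y.2, hy⟩
      · rintro ⟨hxE, hxC⟩; exact ⟨⟨x, hxE⟩, hxC, rfl⟩
    rw [himg, hKeq, Set.iUnion_inter]
    exact ⟨fun m => K m ∩ C, fun m => (hKcl m).inter hC, rfl⟩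
  -- Eᶜ is Fσ
  have hcompl : IsFsigma Eᶜ := by
    obtain ⟨f, hf, hfeq⟩ := hGδ.eq_iInter_nat
    refine ⟨fun n => (f n)ᶜ, fun n => (hf n).isClosed_compl, ?_⟩
    rw [hfeq, Set.compl_iInter]
  split
  · exact isFsigma_union hval hcompl
  · exact isFsigma_union hval isFsigma_empty
end

section
/- Let X be a topological space and let E₁, …, Eₙ be pairwise disjoint H₁-retracts of X such that each Eᵢ is a Coz_δ-set in X. Then the union E = E₁ ∪ … ∪ Eₙ is an H₁-retract of X. -/
/-- A set is a Coz_δ-set if it is the intersection `⋂ₙ fₙ⁻¹((0,1])` for a sequence of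
continuous functions `fₙ : X → [0,1]`. -/
def IsCozDelta {X : Type*} [TopologicalSpace X] (E : Set X) : Prop :=
  ∃ f : ℕ → X → ℝ, (∀ n, Continuous (f n)) ∧ (∀ n x, f n x ∈ Set.Icc (0:ℝ) 1) ∧
    E = ⋂ n, (f n) ⁻¹' Set.Ioc (0:ℝ) 1

/-- A set is a Zer_σ-set if its complement is a Coz_δ-set. -/
def IsZerSigma {X : Type*} [TopologicalSpace X] (E : Set X) : Prop :=
  IsCozDelta Eᶜ

/-- A set is functionally ambiguous if it is simultaneously Coz_δ and Zer_σ. -/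
def FunctionallyAmbiguous {X : Type*} [TopologicalSpace X] (E : Set X) : Prop :=
  IsCozDelta E ∧ IsZerSigma E


open Set

set_option linter.unusedSectionVars false
section Aux
variable {X : Type*} [TopologicalSpace X]

def ZSet (Z : Set X) : Prop := ∃ f : X → ℝ, Continuous f ∧ Z = f ⁻¹' {0}

def ZSig (A : Set X) : Prop := ∃ Z : ℕ → Set X, (∀ n, ZSet (Z n)) ∧ A = ⋃ n, Z n

lemma zset_empty : ZSet (∅ : Set X) := ⟨fun _ => 1, continuous_const, by simp⟩

lemma zset_univ : ZSet (univ : Set X) := ⟨fun _ => 0, continuous_const, by simp⟩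

lemma ZSet.isClosed {Z : Set X} (h : ZSet Z) : IsClosed Z := by
  obtain ⟨f, hf, rfl⟩ := h
  exact isClosed_singleton.preimage hf

lemma ZSet.zsig {Z : Set X} (h : ZSet Z) : ZSig Z :=
  ⟨fun _ => Z, fun _ => h, (iUnion_const Z).symm⟩

lemma ZSet.inter {Z W : Set X} (hZ : ZSet Z) (hW : ZSet W) : ZSet (Z ∩ W) := by
  obtain ⟨f, hf, rfl⟩ := hZ
  obtain ⟨g, hg, rfl⟩ := hW
  refine ⟨fun x => |f x| + |g x|, hf.abs.add hg.abs, ?_⟩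
  ext x
  simp only [mem_inter_iff, mem_preimage, mem_singleton_iff]
  rw [add_eq_zero_iff_of_nonneg (abs_nonneg _) (abs_nonneg _), abs_eq_zero, abs_eq_zero]

lemma ZSet.union {Z W : Set X} (hZ : ZSet Z) (hW : ZSet W) : ZSet (Z ∪ W) := by
  obtain ⟨f, hf, rfl⟩ := hZ
  obtain ⟨g, hg, rfl⟩ := hW
  exact ⟨fun x => f x * g x, hf.mul hg, by ext x; simp [mul_eq_zero]⟩

lemma ZSet.compl_zsig {Z : Set X} (h : ZSet Z) : ZSig Zᶜ := by
  obtain ⟨f, hf, rfl⟩ := h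
  refine ⟨fun k => (fun x => max (((k : ℝ) + 1)⁻¹ - |f x|) 0) ⁻¹' {0},
    fun k => ⟨_, (continuous_const.sub hf.abs).max continuous_const, rfl⟩, ?_⟩
  ext x
  simp only [mem_compl_iff, mem_preimage, mem_singleton_iff, mem_iUnion, max_eq_right_iff,
    sub_nonpos]
  constructor
  · intro hx
    obtain ⟨k, hk⟩ := exists_nat_gt (|f x|)⁻¹
    refine ⟨k, le_of_lt ?_⟩
    have hpos : (0:ℝ) < |f x| := abs_pos.mpr hx
    rw [inv_lt_comm₀ (by positivity) hpos]
    exact lt_trans hk (by linarith)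
  · rintro ⟨k, hk⟩
    intro h0
    rw [h0] at hk
    simp only [abs_zero] at hk
    exact absurd hk (not_le.mpr (by positivity))

lemma iUnion_pair {A : ℕ → ℕ → Set X} :
    (⋃ n, ⋃ m, A n m) = ⋃ k, A (Nat.unpair k).1 (Nat.unpair k).2 := by
  ext x
  simp only [mem_iUnion]
  constructor
  · rintro ⟨n, m, h⟩
    exact ⟨Nat.pair n m, by simpa [Nat.unpair_pair] using h⟩
  · rintro ⟨k, h⟩
    exact ⟨_, _, h⟩

lemma ZSig.iUnion_nat {A : ℕ → Set X} (h : ∀ n, ZSig (A n)) : ZSig (⋃ n, A n) := by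
  choose Z hZ hA using h
  refine ⟨fun k => Z (Nat.unpair k).1 (Nat.unpair k).2, fun k => hZ _ _, ?_⟩
  rw [← iUnion_pair]
  simp only [← hA]

lemma ZSig.inter {A B : Set X} (hA : ZSig A) (hB : ZSig B) : ZSig (A ∩ B) := by
  obtain ⟨Z, hZ, rfl⟩ := hA
  obtain ⟨W, hW, rfl⟩ := hB
  have : (⋃ n, Z n) ∩ ⋃ m, W m = ⋃ n, ⋃ m, Z n ∩ W m := by
    ext x; simp only [mem_inter_iff, mem_iUnion]; tauto
  rw [this, iUnion_pair]
  exact ⟨_, fun k => (hZ _).inter (hW _), rfl⟩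

lemma ZSig.union {A B : Set X} (hA : ZSig A) (hB : ZSig B) : ZSig (A ∪ B) := by
  obtain ⟨Z, hZ, rfl⟩ := hA
  obtain ⟨W, hW, rfl⟩ := hB
  exact ⟨fun n => Z n ∪ W n, fun n => (hZ n).union (hW n), (iUnion_union_distrib _ _).symm⟩

lemma ZSig.biInter_finset {ι : Type*} {s : Finset ι} {A : ι → Set X}
    (h : ∀ i ∈ s, ZSig (A i)) : ZSig (⋂ i ∈ s, A i) := by
  classical
  induction s using Finset.induction_on with
  | empty => simpa using zset_univ.zsig
  | @insert a s ha ih =>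
    simp only [Finset.set_biInter_insert]
    exact (h a (Finset.mem_insert_self a s)).inter
      (ih fun i hi => h i (Finset.mem_insert_of_mem hi))

lemma ZSig.isFsigma {A : Set X} (h : ZSig A) : IsFsigma A := by
  obtain ⟨Z, hZ, rfl⟩ := h
  exact ⟨Z, fun n => (hZ n).isClosed, rfl⟩

lemma IsFsigma.union {A B : Set X} (hA : IsFsigma A) (hB : IsFsigma B) : IsFsigma (A ∪ B) := by
  obtain ⟨F, hF, rfl⟩ := hA
  obtain ⟨G, hG, rfl⟩ := hB
  exact ⟨fun n => F n ∪ G n, fun n => (hF n).union (hG n), (iUnion_union_distrib _ _).symm⟩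

lemma IsFsigma.inter {A B : Set X} (hA : IsFsigma A) (hB : IsFsigma B) : IsFsigma (A ∩ B) := by
  obtain ⟨F, hF, rfl⟩ := hA
  obtain ⟨G, hG, rfl⟩ := hB
  have : (⋃ n, F n) ∩ ⋃ m, G m = ⋃ n, ⋃ m, F n ∩ G m := by
    ext x; simp only [mem_inter_iff, mem_iUnion]; tauto
  rw [this, iUnion_pair]
  exact ⟨_, fun k => (hF _).inter (hG _), rfl⟩

lemma IsFsigma.iUnion_fin {m : ℕ} {A : Fin m → Set X} (h : ∀ i, IsFsigma (A i)) :
    IsFsigma (⋃ i, A i) := by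
  classical
  have : (⋃ i, A i) = ⋃ i ∈ Finset.univ, A i := by simp
  rw [this]
  induction (Finset.univ : Finset (Fin m)) using Finset.induction_on with
  | empty => exact ⟨fun _ => ∅, fun _ => isClosed_empty, by simp⟩
  | @insert a s ha ih =>
    simp only [Finset.set_biUnion_insert]
    exact (h a).union ih

lemma isCozDelta_iff_zsig_compl {E : Set X} : IsCozDelta E ↔ ZSig Eᶜ := by
  constructor
  · rintro ⟨f, hc, hb, rfl⟩
    rw [compl_iInter]
    refine ZSig.iUnion_nat fun n => ZSet.zsig ⟨f n, hc n, ?_⟩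
    ext x
    have h1 := (hb n x).1
    have h2 := (hb n x).2
    simp only [mem_compl_iff, mem_preimage, mem_Ioc, mem_singleton_iff]
    constructor
    · intro h; by_contra h0; exact h ⟨lt_of_le_of_ne h1 (Ne.symm h0), h2⟩
    · intro h hc'; exact absurd h (ne_of_gt hc'.1)
  · rintro ⟨Z, hZ, hE⟩
    choose g hg hZg using hZ
    refine ⟨fun n x => min |g n x| 1, fun n => ((hg n).abs.min continuous_const), 
      fun n x => ⟨le_min (abs_nonneg _) zero_le_one, min_le_right _ _⟩, ?_⟩
    have : E = ⋂ n, (Z n)ᶜ := by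
      rw [← compl_iUnion, ← hE, compl_compl]
    rw [this]
    refine iInter_congr fun n => ?_
    ext x
    rw [hZg n]
    simp only [mem_compl_iff, mem_preimage, mem_singleton_iff, mem_Ioc, lt_min_iff, abs_pos,
      min_le_iff]
    constructor
    · intro h; exact ⟨⟨h, one_pos⟩, Or.inr le_rfl⟩
    · intro h; exact h.1.1

lemma zsig_reduction {A B : Set X} (hA : ZSig A) (hB : ZSig B) (hcov : A ∪ B = univ) :
    ∃ A' : Set X, ZSig A' ∧ ZSig A'ᶜ ∧ A' ⊆ A ∧ A'ᶜ ⊆ B := by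
  classical
  obtain ⟨Z, hZ, rfl⟩ := hA
  obtain ⟨W, hW, rfl⟩ := hB
  set A' : Set X := ⋃ n, (Z n ∩ ⋂ m ∈ Finset.range n, (W m)ᶜ) with hA'
  set B' : Set X := ⋃ n, (W n ∩ ⋂ m ∈ Finset.range (n+1), (Z m)ᶜ) with hB'
  have hdisj : ∀ x, x ∈ A' → x ∈ B' → False := by
    intro x hxA hxB
    obtain ⟨n, hxn, hn⟩ := mem_iUnion.mp hxA
    obtain ⟨k, hxk, hk⟩ := mem_iUnion.mp hxB
    simp only [mem_iInter, Finset.mem_range, mem_compl_iff] at hn hk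
    rcases le_or_gt n k with h | h
    · exact hk n (Nat.lt_succ_of_le h) hxn
    · exact hn k h hxk
  have hcover : ∀ x, x ∈ A' ∨ x ∈ B' := by
    intro x
    have hx : x ∈ (⋃ n, Z n) ∪ ⋃ n, W n := hcov ▸ mem_univ x
    have hex : ∃ n, x ∈ Z n ∨ x ∈ W n := by
      rcases hx with h | h
      · obtain ⟨n, hn⟩ := mem_iUnion.mp h; exact ⟨n, Or.inl hn⟩
      · obtain ⟨n, hn⟩ := mem_iUnion.mp h; exact ⟨n, Or.inr hn⟩
    have hmin : ∀ m < Nat.find hex, x ∉ Z m ∧ x ∉ W m := by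
      intro m hm
      have := Nat.find_min hex hm
      push_neg at this
      exact this
    by_cases hz : x ∈ Z (Nat.find hex)
    · left
      refine mem_iUnion.mpr ⟨Nat.find hex, hz, ?_⟩
      simp only [mem_iInter, Finset.mem_range, mem_compl_iff]
      exact fun m hm => (hmin m hm).2
    · right
      have hw : x ∈ W (Nat.find hex) := (Nat.find_spec hex).resolve_left hz
      refine mem_iUnion.mpr ⟨Nat.find hex, hw, ?_⟩
      simp only [mem_iInter, Finset.mem_range, mem_compl_iff]
      intro m hm
      rcases Nat.lt_succ_iff_lt_or_eq.mp hm with h | h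
      · exact (hmin m h).1
      · subst h; exact hz
  have hAB : A'ᶜ = B' := by
    ext x
    simp only [mem_compl_iff]
    constructor
    · intro h; exact (hcover x).resolve_left h
    · intro h hA; exact hdisj x hA h
  have hZA' : ZSig A' :=
    ZSig.iUnion_nat fun n =>
      ((hZ n).zsig.inter (ZSig.biInter_finset fun m _ => (hW m).compl_zsig))
  have hZB' : ZSig B' :=
    ZSig.iUnion_nat fun n =>
      ((hW n).zsig.inter (ZSig.biInter_finset fun m _ => (hZ m).compl_zsig))
  refine ⟨A', hZA', by rw [hAB]; exact hZB', ?_, ?_⟩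
  · exact iUnion_mono fun n => inter_subset_left
  · rw [hAB]; exact iUnion_mono fun n => inter_subset_left

lemma exists_ambiguous_sep {A B : Set X} (hA : IsCozDelta A) (hB : IsCozDelta B)
    (hd : Disjoint A B) : ∃ C : Set X, ZSig C ∧ ZSig Cᶜ ∧ A ⊆ C ∧ Disjoint C B := by
  have hc : Aᶜ ∪ Bᶜ = univ := by
    rw [← compl_inter, disjoint_iff_inter_eq_empty.mp hd, compl_empty]
  obtain ⟨A', h1, h2, h3, h4⟩ := zsig_reduction (isCozDelta_iff_zsig_compl.mp hA)
    (isCozDelta_iff_zsig_compl.mp hB) hc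
  refine ⟨A'ᶜ, h2, by rwa [compl_compl], subset_compl_comm.mp h3, ?_⟩
  exact Set.disjoint_left.mpr fun x hx hb => h4 hx hb

end Aux

/-- A finite union of pairwise disjoint H₁-retracts which are Coz_δ-sets is an H₁-retract. -/
theorem isH1Retract_union_of_cozDelta {X : Type*} [TopologicalSpace X] {n : ℕ} (hn : 0 < n)
    (E : Fin n → Set X) (hdisj : Pairwise (Function.onFun Disjoint E))
    (hret : ∀ i, IsH1Retract (E i)) (hcoz : ∀ i, IsCozDelta (E i)) :
    IsH1Retract (⋃ i, E i) := by
  classical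
  choose r hfix hleb using hret
  -- separating functionally ambiguous sets
  have hsep : ∀ i : Fin n, ∃ C : Set X, ZSig C ∧ ZSig Cᶜ ∧ E i ⊆ C ∧
      ∀ j, j ≠ i → Disjoint (C) (E j) := by
    intro i
    have hU : IsCozDelta (⋃ j ∈ Finset.univ.erase i, E j) := by
      rw [isCozDelta_iff_zsig_compl, compl_iUnion₂]
      exact ZSig.biInter_finset fun j _ => isCozDelta_iff_zsig_compl.mp (hcoz j)
    have hdU : Disjoint (E i) (⋃ j ∈ Finset.univ.erase i, E j) := by
      refine Set.disjoint_left.mpr fun x hx hxin => ?_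
      simp only [mem_iUnion, exists_prop] at hxin
      obtain ⟨j, hj, hxj⟩ := hxin
      exact Set.disjoint_left.mp (hdisj (Finset.ne_of_mem_erase hj).symm) hx hxj
    obtain ⟨C, h1, h2, h3, h4⟩ := exists_ambiguous_sep (hcoz i) hU hdU
    refine ⟨C, h1, h2, h3, fun j hj => ?_⟩
    exact h4.mono_right (subset_iUnion₂ (s := fun j _ => E j) j (Finset.mem_erase.mpr ⟨hj, Finset.mem_univ j⟩))
  choose C hC1 hC2 hC3 hC4 using hsep
  -- index function: least i with x ∈ C i, default 0
  let i₀ : Fin n := ⟨0, hn⟩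
  let idx : X → Fin n := fun x =>
    if h : (Finset.univ.filter (fun i => x ∈ C i)).Nonempty then Finset.min' _ h else i₀
  have hidx : ∀ x i, idx x = i ↔
      (x ∈ C i ∧ ∀ j, j < i → x ∉ C j) ∨ (i = i₀ ∧ ∀ j, x ∉ C j) := by
    intro x i
    by_cases h : (Finset.univ.filter (fun i => x ∈ C i)).Nonempty
    · have hmem : ∀ j, j ∈ Finset.univ.filter (fun i => x ∈ C i) ↔ x ∈ C j := by
        intro j; simp [Finset.mem_filter]
      simp only [idx, dif_pos h]
      constructor
      · intro hi
        left
        constructor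
        · rw [← hmem]; rw [← hi]; exact Finset.min'_mem _ h
        · intro j hj hxj
          have := Finset.min'_le _ j ((hmem j).mpr hxj)
          rw [hi] at this
          exact absurd hj (not_lt.mpr this)
      · rintro (⟨hxi, hlt⟩ | ⟨hi, hall⟩)
        · have h1 : Finset.min' _ h ≤ i := Finset.min'_le _ i ((hmem i).mpr hxi)
          have h2 : x ∈ C (Finset.min' _ h) := (hmem _).mp (Finset.min'_mem _ h)
          rcases lt_or_eq_of_le h1 with h' | h'
          · exact absurd h2 (hlt _ h')
          · exact h'
        · obtain ⟨j, hj⟩ := h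
          exact absurd ((hmem j).mp hj) (hall j)
    · have hall : ∀ j, x ∉ C j := by
        intro j hj
        exact h ⟨j, by simp [Finset.mem_filter, hj]⟩
      simp only [idx, dif_neg h]
      constructor
      · intro hi; exact Or.inr ⟨hi.symm, hall⟩
      · rintro (⟨hxi, -⟩ | ⟨hi, -⟩)
        · exact absurd hxi (hall i)
        · exact hi.symm
  -- the retraction
  refine ⟨fun x => ⟨(r (idx x) x : X), mem_iUnion.mpr ⟨idx x, (r (idx x) x).2⟩⟩, ?_, ?_⟩
  · rintro ⟨x, hx⟩
    obtain ⟨j, hj⟩ := mem_iUnion.mp hx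
    have hij : idx x = j := by
      rw [hidx]
      left
      refine ⟨hC3 j hj, fun k hk hxk => ?_⟩
      exact Set.disjoint_left.mp (hC4 k j (ne_of_gt hk)) hxk hj
    ext
    show (r (idx x) x : X) = x
    rw [hij]
    exact congrArg Subtype.val (hfix j ⟨x, hj⟩)
  · intro V hV
    have key : (fun x => (⟨(r (idx x) x : X), mem_iUnion.mpr ⟨idx x, (r (idx x) x).2⟩⟩ :
        ↥(⋃ i, E i))) ⁻¹' V =
        ⋃ i, ({x | idx x = i} ∩ (r i) ⁻¹' (Set.inclusion (subset_iUnion E i) ⁻¹' V)) := by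
      ext x
      simp only [mem_preimage, mem_iUnion, mem_inter_iff, mem_setOf_eq]
      constructor
      · intro h
        exact ⟨idx x, rfl, h⟩
      · rintro ⟨i, hi, h⟩
        rw [← hi] at h
        exact h
    rw [key]
    refine IsFsigma.iUnion_fin fun i => IsFsigma.inter ?_ ?_
    · have hDi : {x | idx x = i} =
          (C i ∩ ⋂ j ∈ Finset.univ.filter (· < i), (C j)ᶜ) ∪
            (if i = i₀ then ⋂ j, (C j)ᶜ else ∅) := by
        ext x
        rw [mem_setOf_eq, hidx]
        simp only [mem_union, mem_inter_iff, mem_iInter, Finset.mem_filter, Finset.mem_univ,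
          true_and, mem_compl_iff]
        constructor
        · rintro (⟨h1, h2⟩ | ⟨h1, h2⟩)
          · exact Or.inl ⟨h1, fun j hj => h2 j hj⟩
          · right; rw [if_pos h1]; exact mem_iInter.mpr fun j => h2 j
        · rintro (⟨h1, h2⟩ | h1)
          · exact Or.inl ⟨h1, fun j hj => h2 j hj⟩
          · by_cases hi : i = i₀
            · rw [if_pos hi] at h1; exact Or.inr ⟨hi, fun j => mem_iInter.mp h1 j⟩
            · rw [if_neg hi] at h1; exact absurd h1 (notMem_empty x)
      rw [hDi]
      refine ZSig.isFsigma (ZSig.union ?_ ?_)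
      · exact (hC1 i).inter (ZSig.biInter_finset fun j _ => hC2 j)
      · split
        · have : (⋂ j, (C j)ᶜ) = ⋂ j ∈ Finset.univ, (C j)ᶜ := by simp
          rw [this]
          exact ZSig.biInter_finset fun j _ => hC2 j
        · exact zset_empty.zsig
    · exact hleb i _ (hV.preimage (continuous_inclusion (subset_iUnion E i)))
end
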